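/- arXiv:1601.06114 — 13 statements merged into one kernel-verified Lean document; each statement's English description precedes it below -/
import Mathlib

section
/- If x ∈ ℂⁿ satisfies ‖x‖₂² = n and x*Cx ≥ z*Cz, then the distance d(z,x) = √(2(n - |z*x|)) satisfies d(z,x) ≤ 4‖Δ‖_op/√n. -/
open scoped Matrix.Norms.L2Operator
open Matrix Complex

noncomputable section

lemma aux_vecMulVec_dot {n : ℕ} (z u v : Fin n → ℂ) :
    star u ⬝ᵥ (Matrix.vecMulVec z (star z)).mulVec v = (star u ⬝ᵥ z) * (star z ⬝ᵥ v) := by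
  have h : (Matrix.vecMulVec z (star z)).mulVec v = (star z ⬝ᵥ v) • z := by
    ext i
    simp only [Matrix.mulVec, Matrix.vecMulVec_apply, dotProduct, Pi.smul_apply,
      smul_eq_mul, Pi.star_apply]
    rw [Finset.sum_mul]
    exact Finset.sum_congr rfl fun j _ => by ring
  rw [h, dotProduct_smul, smul_eq_mul]
  ring

lemma aux_dot_bound {n : ℕ} (Δ : Matrix (Fin n) (Fin n) ℂ) (u v : EuclideanSpace ℂ (Fin n)) :
    ‖star (u : Fin n → ℂ) ⬝ᵥ Δ.mulVec v‖ ≤ ‖Δ‖ * ‖u‖ * ‖v‖ := by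
  have h1 : (star (u : Fin n → ℂ) ⬝ᵥ Δ.mulVec v)
      = @inner ℂ _ _ u ((EuclideanSpace.equiv (Fin n) ℂ).symm (Δ.mulVec v)) := by
    rw [EuclideanSpace.inner_eq_star_dotProduct, dotProduct_comm]; rfl
  rw [h1]
  calc ‖@inner ℂ _ _ u ((EuclideanSpace.equiv (Fin n) ℂ).symm (Δ.mulVec v))‖
      ≤ ‖u‖ * ‖(EuclideanSpace.equiv (Fin n) ℂ).symm (Δ.mulVec v)‖ := norm_inner_le_norm _ _
    _ ≤ ‖u‖ * (‖Δ‖ * ‖v‖) := by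
        gcongr
        exact Matrix.l2_opNorm_mulVec Δ v
    _ = ‖Δ‖ * ‖u‖ * ‖v‖ := by ring

theorem stmt0 {n : ℕ} (z x : Fin n → ℂ) (Δ : Matrix (Fin n) (Fin n) ℂ)
    (hΔ : Δ.IsHermitian) (hz : ∀ i, ‖z i‖ = 1)
    (C : Matrix (Fin n) (Fin n) ℂ) (hC : C = Matrix.vecMulVec z (star z) + Δ)
    (hx : ∑ i, ‖x i‖ ^ 2 = n)
    (hopt : (star z ⬝ᵥ C.mulVec z).re ≤ (star x ⬝ᵥ C.mulVec x).re) :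
    Real.sqrt (2 * (n - ‖star z ⬝ᵥ x‖)) ≤ 4 * ‖Δ‖ / Real.sqrt n := by
  rcases Nat.eq_zero_or_pos n with hn | hn
  · subst hn
    simp [dotProduct]
  set a := ‖Δ‖ with ha
  have ha0 : 0 ≤ a := norm_nonneg _
  set w := star z ⬝ᵥ x with hwdef
  set t := ‖w‖ with htdef
  have ht0 : 0 ≤ t := norm_nonneg _
  -- basic facts
  have hzz : star z ⬝ᵥ z = (n : ℂ) := by
    have h1 : ∀ i, (starRingEnd ℂ) (z i) * z i = 1 := by
      intro i
      have hns : Complex.normSq (z i) = 1 := by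
        rw [Complex.normSq_eq_norm_sq, hz i]; norm_num
      rw [mul_comm, Complex.mul_conj, hns]; norm_num
    simp [dotProduct, h1]
  -- Euclidean vectors
  set Z : EuclideanSpace ℂ (Fin n) := (EuclideanSpace.equiv (Fin n) ℂ).symm z with hZdef
  set X : EuclideanSpace ℂ (Fin n) := (EuclideanSpace.equiv (Fin n) ℂ).symm x with hXdef
  have hsq : Real.sqrt n * Real.sqrt n = n := Real.mul_self_sqrt (Nat.cast_nonneg n)
  have hZn : ‖Z‖ = Real.sqrt n := by
    rw [EuclideanSpace.norm_eq]
    show Real.sqrt (∑ i, ‖z i‖ ^ 2) = Real.sqrt n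
    have hzsum : ∑ i, ‖z i‖ ^ 2 = (n:ℝ) := by
      have : ∀ i ∈ Finset.univ, ‖z i‖ ^ 2 = (1:ℝ) := fun i _ => by
        rw [hz i]; norm_num
      rw [Finset.sum_congr rfl this]
      simp
    rw [hzsum]
  have hXn : ‖X‖ = Real.sqrt n := by
    rw [EuclideanSpace.norm_eq]
    show Real.sqrt (∑ i, ‖x i‖ ^ 2) = Real.sqrt n
    have hxsum : ∑ i, ‖x i‖ ^ 2 = (n:ℝ) := by
      exact hx
    rw [hxsum]
  have htn : t ≤ n := by
    have h1 : ‖@inner ℂ _ _ Z X‖ ≤ ‖Z‖ * ‖X‖ := norm_inner_le_norm _ _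
    have h2 : @inner ℂ _ _ Z X = w := by
      rw [EuclideanSpace.inner_eq_star_dotProduct, dotProduct_comm]; rfl
    rw [h2, hZn, hXn, hsq] at h1
    exact h1
  -- phase alignment
  obtain ⟨c, hc1, hcw⟩ : ∃ c : ℂ, ‖c‖ = 1 ∧ c * w = (t : ℂ) := by
    by_cases hw : w = 0
    · exact ⟨1, by simp, by simp [hw, htdef]⟩
    · have htpos : (0:ℝ) < t := norm_pos_iff.mpr hw
      refine ⟨(starRingEnd ℂ) w / (t : ℂ), ?_, ?_⟩
      · rw [norm_div]
        simp [htdef, htpos.ne', hw]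
      · rw [div_mul_eq_mul_div, mul_comm, Complex.mul_conj, Complex.normSq_eq_norm_sq, ← htdef]
        push_cast
        rw [sq, mul_div_assoc, div_self (by exact_mod_cast htpos.ne'), mul_one]
  set y : Fin n → ℂ := c • x with hydef
  set Y : EuclideanSpace ℂ (Fin n) := (EuclideanSpace.equiv (Fin n) ℂ).symm y with hYdef
  have hYn : ‖Y‖ = Real.sqrt n := by
    rw [EuclideanSpace.norm_eq, ← hXn, EuclideanSpace.norm_eq]
    congr 1
    refine Finset.sum_congr rfl fun i _ => ?_
    show ‖y i‖ ^ 2 = ‖x i‖ ^ 2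
    have : ‖y i‖ = ‖x i‖ := by
      simp [hydef, norm_mul, hc1]
    rw [this]
  have hzy : star z ⬝ᵥ y = (t : ℂ) := by
    rw [hydef, dotProduct_smul, smul_eq_mul, ← hwdef, hcw]
  have hcc : (starRingEnd ℂ) c * c = 1 := by
    rw [mul_comm, Complex.mul_conj, Complex.normSq_eq_norm_sq, hc1]; norm_num
  have hyy : star y ⬝ᵥ Δ.mulVec y = star x ⬝ᵥ Δ.mulVec x := by
    have h1 : star y = (starRingEnd ℂ) c • star x := by
      ext i; simp [hydef, mul_comm]
    rw [h1, hydef, Matrix.mulVec_smul, smul_dotProduct, dotProduct_smul]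
    rw [smul_smul, hcc, one_smul]
  -- expand hopt
  have hxz : star x ⬝ᵥ z = (starRingEnd ℂ) w := by
    rw [hwdef]
    simp only [dotProduct, map_sum, Pi.star_apply, _root_.map_mul, Complex.conj_conj,
      RCLike.star_def]
    exact Finset.sum_congr rfl fun i _ => mul_comm _ _
  have hopt' : (n:ℝ)^2 + (star z ⬝ᵥ Δ.mulVec z).re ≤ t^2 + (star x ⬝ᵥ Δ.mulVec x).re := by
    have e1 : star z ⬝ᵥ C.mulVec z = (n:ℂ)^2 + star z ⬝ᵥ Δ.mulVec z := by
      rw [hC, Matrix.add_mulVec, dotProduct_add, aux_vecMulVec_dot, hzz]; ring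
    have e2 : star x ⬝ᵥ C.mulVec x = (t:ℂ)^2 + star x ⬝ᵥ Δ.mulVec x := by
      rw [hC, Matrix.add_mulVec, dotProduct_add, aux_vecMulVec_dot, hxz, ← hwdef]
      rw [mul_comm, Complex.mul_conj, Complex.normSq_eq_norm_sq, ← htdef]
      push_cast; ring
    rw [e1, e2] at hopt
    simp only [Complex.add_re] at hopt
    have r1 : (((n:ℂ))^2).re = (n:ℝ)^2 := by
      norm_cast
    have r2 : (((t:ℝ):ℂ)^2).re = t^2 := by
      rw [← Complex.ofReal_pow, Complex.ofReal_re]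
    rw [r1, r2] at hopt
    exact hopt
  -- distance
  set d := Real.sqrt (2 * (n - t)) with hddef
  have hd0 : 0 ≤ d := Real.sqrt_nonneg _
  have hzyInner : @inner ℂ _ _ Z Y = (t : ℂ) := by
    rw [EuclideanSpace.inner_eq_star_dotProduct, dotProduct_comm]; exact hzy
  have hYZ : ‖Y - Z‖ = d := by
    have hsq2 : ‖Y - Z‖ ^ 2 = 2 * ((n:ℝ) - t) := by
      have := @norm_sub_sq ℂ _ _ _ _ Y Z
      rw [this, hYn, hZn]
      have : @inner ℂ _ _ Y Z = (t : ℂ) := by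
        rw [← inner_conj_symm, hzyInner]
        simp
      rw [this]
      simp [hsq]
      ring
    rw [hddef, ← hsq2, Real.sqrt_sq (norm_nonneg _)]
  have hd2 : d ^ 2 = 2 * ((n:ℝ) - t) := by
    rw [hddef, Real.sq_sqrt]
    nlinarith [htn]
  -- difference bound
  have hdiff : (star x ⬝ᵥ Δ.mulVec x).re - (star z ⬝ᵥ Δ.mulVec z).re ≤ 2 * a * Real.sqrt n * d := by
    rw [← hyy]
    have hdec : star y ⬝ᵥ Δ.mulVec y - star z ⬝ᵥ Δ.mulVec z
        = star (y - z) ⬝ᵥ Δ.mulVec y + star z ⬝ᵥ Δ.mulVec (y - z) := by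
      rw [star_sub, sub_dotProduct, Matrix.mulVec_sub, dotProduct_sub]
      ring
    have h1 : ‖star (y - z) ⬝ᵥ Δ.mulVec y‖ ≤ a * d * Real.sqrt n := by
      have := aux_dot_bound Δ (Y - Z) Y
      rw [hYZ, hYn] at this
      exact this
    have h2 : ‖star z ⬝ᵥ Δ.mulVec (y - z)‖ ≤ a * Real.sqrt n * d := by
      have := aux_dot_bound Δ Z (Y - Z)
      rw [hYZ, hZn] at this
      exact this
    calc (star y ⬝ᵥ Δ.mulVec y).re - (star z ⬝ᵥ Δ.mulVec z).re
        = (star y ⬝ᵥ Δ.mulVec y - star z ⬝ᵥ Δ.mulVec z).re := by simp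
      _ ≤ ‖star y ⬝ᵥ Δ.mulVec y - star z ⬝ᵥ Δ.mulVec z‖ := Complex.re_le_norm _
      _ = ‖star (y - z) ⬝ᵥ Δ.mulVec y + star z ⬝ᵥ Δ.mulVec (y - z)‖ := by
          rw [hdec]
      _ ≤ ‖star (y - z) ⬝ᵥ Δ.mulVec y‖ + ‖star z ⬝ᵥ Δ.mulVec (y - z)‖ :=
          norm_add_le _ _
      _ ≤ a * d * Real.sqrt n + a * Real.sqrt n * d := add_le_add h1 h2
      _ = 2 * a * Real.sqrt n * d := by ring
  -- final arithmetic
  have hkey : (n:ℝ) * d ^ 2 ≤ 4 * a * Real.sqrt n * d := by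
    have hnt : (0:ℝ) ≤ (n:ℝ) - t := by linarith only [htn]
    have h7 : (n:ℝ)^2 - t^2 ≤ 2 * a * Real.sqrt n * d := by linarith only [hopt', hdiff]
    have h8' : (n:ℝ) * ((n:ℝ) - t) = (n:ℝ)^2 - t^2 - t * ((n:ℝ) - t) := by ring
    have h8 : (n:ℝ) * ((n:ℝ) - t) ≤ (n:ℝ)^2 - t^2 := by
      linarith only [h8', mul_nonneg ht0 hnt]
    have h9 : (n:ℝ) * d ^ 2 = 2 * ((n:ℝ) * ((n:ℝ) - t)) := by rw [hd2]; ring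
    linarith only [h7, h8, h9]
  have hnpos : (0:ℝ) < n := Nat.cast_pos.mpr hn
  have hspos : 0 < Real.sqrt n := Real.sqrt_pos.mpr hnpos
  rcases eq_or_lt_of_le hd0 with h | h
  · rw [← h]; positivity
  · rw [le_div_iff₀ hspos]
    have e : Real.sqrt n * d * (Real.sqrt n * d) = (n:ℝ) * d ^ 2 := by
      calc Real.sqrt n * d * (Real.sqrt n * d) = (Real.sqrt n * Real.sqrt n) * (d * d) := by ring
        _ = (n:ℝ) * d ^ 2 := by rw [hsq]; ring
    have h5 : Real.sqrt n * d * (Real.sqrt n * d) ≤ 4 * a * (Real.sqrt n * d) := by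
      rw [e]; linarith only [hkey]
    have h6 : 0 < Real.sqrt n * d := by positivity
    have := le_of_mul_le_mul_right (by linarith only [h5] : (Real.sqrt n * d) * (Real.sqrt n * d) ≤ (4 * a) * (Real.sqrt n * d)) h6
    linarith only [this]
end
end

section
/- Let x_opt be a global maximizer of f(x) = x*Cx over ℂⁿ₁. Then for any x ∈ ℂⁿ₁, 0 ≤ f(x_opt) − f(x) ≤ −n·λ_min(S(x)). In particular, if S(x) is positive semidefinite, then x is a global maximizer. -/
open Matrix Complex
open scoped ComplexOrder

noncomputable section

/-- `S(x) = Re{ddiag(C x x*)} − C`. -/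
def Smat {n : ℕ} (C : Matrix (Fin n) (Fin n) ℂ) (x : Fin n → ℂ) : Matrix (Fin n) (Fin n) ℂ :=
  Matrix.diagonal (fun i => ((C.mulVec x i * (starRingEnd ℂ) (x i)).re : ℂ)) - C

lemma conj_self_one {z : ℂ} (hz : ‖z‖ = 1) : (starRingEnd ℂ) z * z = 1 := by
  rw [mul_comm, Complex.mul_conj]
  norm_cast
  simp [Complex.normSq_eq_norm_sq, hz]

lemma quad_eq {n : ℕ} (C : Matrix (Fin n) (Fin n) ℂ) (x : Fin n → ℂ)
    (hx : ∀ i, ‖x i‖ = 1) (y : Fin n → ℂ) (hy : ∀ i, ‖y i‖ = 1) :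
    (star y ⬝ᵥ (Smat C x).mulVec y).re
      = (star x ⬝ᵥ C.mulVec x).re - (star y ⬝ᵥ C.mulVec y).re := by
  have h1 : star y ⬝ᵥ (Matrix.diagonal
      (fun i => ((C.mulVec x i * (starRingEnd ℂ) (x i)).re : ℂ))).mulVec y
      = ∑ i, ((C.mulVec x i * (starRingEnd ℂ) (x i)).re : ℂ) := by
    unfold dotProduct
    refine Finset.sum_congr rfl fun i _ => ?_
    rw [Matrix.mulVec_diagonal, mul_left_comm, Pi.star_apply,
      show star (y i) = (starRingEnd ℂ) (y i) from rfl, conj_self_one (hy i), mul_one]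
  have h2 : (star x ⬝ᵥ C.mulVec x).re
      = ∑ i, (C.mulVec x i * (starRingEnd ℂ) (x i)).re := by
    unfold dotProduct
    rw [Complex.re_sum]
    refine Finset.sum_congr rfl fun i _ => ?_
    rw [Pi.star_apply, show (star (x i)) = (starRingEnd ℂ) (x i) from rfl, mul_comm]
  rw [Smat, Matrix.sub_mulVec, dotProduct_sub, Complex.sub_re, h1, h2,
    Complex.re_sum]
  simp

lemma psd_shift {n : ℕ} [NeZero n] {A : Matrix (Fin n) (Fin n) ℂ} (hA : A.IsHermitian) :
    (A - ((⨅ i, hA.eigenvalues i : ℝ) : ℂ) • (1 : Matrix (Fin n) (Fin n) ℂ)).PosSemidef := by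
  set c : ℝ := ⨅ i, hA.eigenvalues i with hc
  set U : Matrix (Fin n) (Fin n) ℂ := (hA.eigenvectorUnitary : Matrix (Fin n) (Fin n) ℂ) with hUdef
  have hUU : U * star U = 1 := Matrix.mem_unitaryGroup_iff.mp hA.eigenvectorUnitary.2
  have hd : Matrix.diagonal (RCLike.ofReal ∘ hA.eigenvalues) - (c : ℂ) • (1 : Matrix (Fin n) (Fin n) ℂ)
      = Matrix.diagonal (fun i => ((hA.eigenvalues i - c : ℝ) : ℂ)) := by
    rw [← Matrix.diagonal_one, ← Matrix.diagonal_smul]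
    rw [Matrix.diagonal_sub]
    congr 1
    funext i
    push_cast
    simp
  have key : A - (c : ℂ) • (1 : Matrix (Fin n) (Fin n) ℂ)
      = U * (Matrix.diagonal (fun i => ((hA.eigenvalues i - c : ℝ) : ℂ))) * Uᴴ := by
    have h1 : (c : ℂ) • (1 : Matrix (Fin n) (Fin n) ℂ)
        = U * ((c : ℂ) • (1 : Matrix (Fin n) (Fin n) ℂ)) * star U := by
      rw [Matrix.mul_smul, mul_one, Matrix.smul_mul, hUU]
    conv_lhs => rw [hA.spectral_theorem, Unitary.conjStarAlgAut_apply, ← hUdef, h1]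
    rw [← Matrix.sub_mul, ← Matrix.mul_sub, hd]
    rfl
  rw [key]
  refine Matrix.PosSemidef.mul_mul_conjTranspose_same (Matrix.PosSemidef.diagonal ?_) U
  intro i
  simp only [Pi.zero_apply]
  rw [Complex.zero_le_real]
  exact sub_nonneg.mpr (ciInf_le (Finite.bddBelow_range _) i)

lemma quad_lower {n : ℕ} {A : Matrix (Fin n) (Fin n) ℂ} (hA : A.IsHermitian)
    (y : Fin n → ℂ) (hy : ∀ i, ‖y i‖ = 1) :
    (n : ℝ) * (⨅ i, hA.eigenvalues i) ≤ (star y ⬝ᵥ A.mulVec y).re := by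
  rcases Nat.eq_zero_or_pos n with h0 | hpos
  · subst h0
    simp [dotProduct]
  have : NeZero n := ⟨hpos.ne'⟩
  have hpsd : (0 : ℝ) ≤ (star y ⬝ᵥ (A - ((⨅ i, hA.eigenvalues i : ℝ) : ℂ)
      • (1 : Matrix (Fin n) (Fin n) ℂ)).mulVec y).re :=
    (psd_shift hA).re_dotProduct_nonneg y
  have hyy : star y ⬝ᵥ y = (n : ℂ) := by
    unfold dotProduct
    have h1 : ∀ i, (starRingEnd ℂ) (y i) * y i = 1 := fun i => conj_self_one (hy i)
    simp [h1]
  have hexp : star y ⬝ᵥ (((⨅ i, hA.eigenvalues i : ℝ) : ℂ)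
      • (1 : Matrix (Fin n) (Fin n) ℂ)).mulVec y
      = ((⨅ i, hA.eigenvalues i : ℝ) : ℂ) * (n : ℂ) := by
    rw [Matrix.smul_mulVec, Matrix.one_mulVec, dotProduct_smul, smul_eq_mul, hyy]
  rw [Matrix.sub_mulVec, dotProduct_sub, Complex.sub_re, hexp] at hpsd
  have h2 : (((⨅ i, hA.eigenvalues i : ℝ) : ℂ) * (n : ℂ)).re
      = (⨅ i, hA.eigenvalues i) * n := by norm_cast
  rw [h2] at hpsd
  linarith

theorem stmt2 {n : ℕ} (C : Matrix (Fin n) (Fin n) ℂ) (hC : C.IsHermitian)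
    (xopt : Fin n → ℂ) (hxopt : ∀ i, ‖xopt i‖ = 1)
    (hglob : ∀ y : Fin n → ℂ, (∀ i, ‖y i‖ = 1) →
      (star y ⬝ᵥ C.mulVec y).re ≤ (star xopt ⬝ᵥ C.mulVec xopt).re)
    (x : Fin n → ℂ) (hx : ∀ i, ‖x i‖ = 1)
    (hS : (Smat C x).IsHermitian) :
    (0 ≤ (star xopt ⬝ᵥ C.mulVec xopt).re - (star x ⬝ᵥ C.mulVec x).re ∧
      (star xopt ⬝ᵥ C.mulVec xopt).re - (star x ⬝ᵥ C.mulVec x).re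
        ≤ -((n : ℝ) * ⨅ i, hS.eigenvalues i)) ∧
    ((Smat C x).PosSemidef → ∀ y : Fin n → ℂ, (∀ i, ‖y i‖ = 1) →
      (star y ⬝ᵥ C.mulVec y).re ≤ (star x ⬝ᵥ C.mulVec x).re) := by
  refine ⟨⟨sub_nonneg.mpr (hglob x hx), ?_⟩, fun hpsd y hy => ?_⟩
  · have h := quad_lower hS xopt hxopt
    rw [quad_eq C x hx xopt hxopt] at h
    linarith
  · have h : (0 : ℝ) ≤ (star y ⬝ᵥ (Smat C x).mulVec y).re := hpsd.re_dotProduct_nonneg y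
    rw [quad_eq C x hx y hy] at h
    linarith
end
end

section
/- If x ∈ ℂⁿ₁ satisfies S(x) ⪰ 0 and rank(S(x)) = n − 1, then the global maximizer of f(x) = x*Cx over ℂⁿ₁ is unique up to a global phase, and equals x up to phase. -/
open Matrix Complex
open scoped ComplexOrder

noncomputable section

lemma smat_quad {n : ℕ} (C : Matrix (Fin n) (Fin n) ℂ) (x w : Fin n → ℂ)
    (hw : ∀ i, ‖w i‖ = 1) :
    star w ⬝ᵥ (Smat C x) *ᵥ w
      = (((star x ⬝ᵥ C.mulVec x).re : ℂ)) - star w ⬝ᵥ C.mulVec w := by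
  have hdiag : star w ⬝ᵥ (Matrix.diagonal
      (fun i => ((C.mulVec x i * (starRingEnd ℂ) (x i)).re : ℂ))) *ᵥ w
      = ((star x ⬝ᵥ C.mulVec x).re : ℂ) := by
    simp only [dotProduct, mulVec_diagonal, Pi.star_apply]
    have key : ∀ i : Fin n, star (w i) * (((C.mulVec x i * (starRingEnd ℂ) (x i)).re : ℂ) * w i)
        = ((C.mulVec x i * (starRingEnd ℂ) (x i)).re : ℂ) := by
      intro i
      have h1 : star (w i) * w i = 1 := by
        rw [Complex.star_def, ← Complex.normSq_eq_conj_mul_self]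
        norm_cast
        rw [Complex.normSq_eq_norm_sq, hw i]; norm_num
      calc star (w i) * (((C.mulVec x i * (starRingEnd ℂ) (x i)).re : ℂ) * w i)
          = (star (w i) * w i) * ((C.mulVec x i * (starRingEnd ℂ) (x i)).re : ℂ) := by ring
        _ = _ := by rw [h1, one_mul]
    rw [Finset.sum_congr rfl (fun i _ => key i)]
    rw [Complex.re_sum]
    push_cast
    exact Finset.sum_congr rfl fun i _ => by rw [Complex.star_def, mul_comm]
  rw [Smat, sub_mulVec, dotProduct_sub, hdiag]

theorem stmt3 {n : ℕ} (C : Matrix (Fin n) (Fin n) ℂ) (hC : C.IsHermitian)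
    (x : Fin n → ℂ) (hx : ∀ i, ‖x i‖ = 1)
    (hpsd : (Smat C x).PosSemidef) (hrank : (Smat C x).rank = n - 1) :
    (∀ w : Fin n → ℂ, (∀ i, ‖w i‖ = 1) →
      (star w ⬝ᵥ C.mulVec w).re ≤ (star x ⬝ᵥ C.mulVec x).re) ∧
    (∀ y : Fin n → ℂ, (∀ i, ‖y i‖ = 1) →
      (∀ w : Fin n → ℂ, (∀ i, ‖w i‖ = 1) →
        (star w ⬝ᵥ C.mulVec w).re ≤ (star y ⬝ᵥ C.mulVec y).re) →
      ∃ θ : ℝ, ∀ i, y i = x i * Complex.exp (θ * Complex.I)) := by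
  set s : ℝ := (star x ⬝ᵥ C.mulVec x).re with hs
  have hmax : ∀ w : Fin n → ℂ, (∀ i, ‖w i‖ = 1) →
      (star w ⬝ᵥ C.mulVec w).re ≤ s := by
    intro w hw
    have h := hpsd.dotProduct_mulVec_nonneg w
    rw [smat_quad C x w hw] at h
    have := (Complex.le_def.mp h).1
    simp only [Complex.zero_re, Complex.sub_re, Complex.ofReal_re] at this
    linarith
  refine ⟨hmax, ?_⟩
  intro y hy hymax
  rcases Nat.eq_zero_or_pos n with hn | hn
  · subst hn
    exact ⟨0, fun i => i.elim0⟩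
  -- quadratic forms vanish
  have hquad : ∀ w : Fin n → ℂ, (∀ i, ‖w i‖ = 1) →
      (star w ⬝ᵥ C.mulVec w).re = s → (Smat C x) *ᵥ w = 0 := by
    intro w hw hwre
    refine (hpsd.dotProduct_mulVec_zero_iff w).mp ?_
    have h := hpsd.dotProduct_mulVec_nonneg w
    rw [smat_quad C x w hw] at h
    have him := (Complex.le_def.mp h).2
    rw [smat_quad C x w hw]
    apply Complex.ext
    · simp [hwre, hs]
    · simpa using him.symm
  have hSx : (Smat C x) *ᵥ x = 0 := hquad x hx rfl
  have hSy : (Smat C x) *ᵥ y = 0 := by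
    refine hquad y hy (le_antisymm (hmax y hy) (hymax x hx))
  set L := (Smat C x).mulVecLin with hL
  have hrange : Module.finrank ℂ (LinearMap.range L) = n - 1 := hrank
  have hdim := LinearMap.finrank_range_add_finrank_ker L
  rw [hrange] at hdim
  have hpi : Module.finrank ℂ (Fin n → ℂ) = n := by simp
  rw [hpi] at hdim
  have hker1 : Module.finrank ℂ (LinearMap.ker L) = 1 := by omega
  have hx0 : x ≠ 0 := by
    intro h
    have := hx ⟨0, hn⟩
    rw [h] at this
    simp at this
  have hxk : x ∈ LinearMap.ker L := by
    simpa [hL, Matrix.mulVecLin_apply] using hSx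
  have hyk : y ∈ LinearMap.ker L := by
    simpa [hL, Matrix.mulVecLin_apply] using hSy
  have hspan : Submodule.span ℂ {x} = LinearMap.ker L := by
    apply Submodule.eq_of_le_of_finrank_le
    · rw [Submodule.span_le, Set.singleton_subset_iff]; exact hxk
    · rw [hker1, finrank_span_singleton hx0]
  rw [← hspan] at hyk
  obtain ⟨c, hc⟩ := Submodule.mem_span_singleton.mp hyk
  have hci : ∀ i, y i = c * x i := fun i => (congrFun hc i).symm
  have hcabs : ‖c‖ = 1 := by
    have h1 := hy ⟨0, hn⟩
    rw [hci ⟨0, hn⟩, norm_mul, hx ⟨0, hn⟩, mul_one] at h1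
    exact h1
  refine ⟨Complex.arg c, fun i => ?_⟩
  have hce : Complex.exp (Complex.arg c * Complex.I) = c := by
    have := Complex.norm_mul_exp_arg_mul_I c
    rwa [hcabs, Complex.ofReal_one, one_mul] at this
  rw [hci i, hce, mul_comm]
end
end

section
/- Let z ∈ ℂⁿ₁ and v ∈ ℂⁿ, and let v̂ ∈ ℂⁿ₁ be defined by v̂_i = v_i/|v_i| when v_i ≠ 0 and v̂_i an arbitrary unit complex number otherwise. Then ‖v̂ − z‖₂ ≤ 2‖v − z‖₂. -/
open Complex

noncomputable section

lemma key_pointwise (a b bh : ℂ) (hb : ‖b‖ = 1) (hbh : ‖bh‖ = 1)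
    (hp : a ≠ 0 → bh = a / (‖a‖ : ℂ)) :
    ‖bh - b‖ ≤ 2 * ‖a - b‖ := by
  by_cases ha : a = 0
  · subst ha
    have h1 : ‖bh - b‖ ≤ 2 := by
      calc ‖bh - b‖ ≤ ‖bh‖ + ‖b‖ := by
            simpa using norm_sub_le bh b
        _ = 2 := by rw [hb, hbh]; norm_num
    have h2 : ‖0 - b‖ = 1 := by simpa using hb
    rw [h2]; linarith
  · have hbh' := hp ha
    have habs : (0:ℝ) < ‖a‖ := norm_pos_iff.mpr ha
    have h1 : ‖bh - a‖ = |1 - ‖a‖| := by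
      rw [hbh']
      have h : a / (‖a‖ : ℂ) - a = a * (((1 - ‖a‖) / ‖a‖ : ℝ) : ℂ) := by
        have hc : ((‖a‖ : ℝ) : ℂ) ≠ 0 := by
          simpa using habs.ne'
        push_cast
        field_simp
      rw [h, norm_mul, Complex.norm_real, Real.norm_eq_abs, abs_div, abs_of_pos habs]
      field_simp
    have h2 : |1 - ‖a‖| ≤ ‖a - b‖ := by
      calc |1 - ‖a‖| = |‖b‖ - ‖a‖| := by rw [hb]
        _ ≤ ‖b - a‖ := abs_norm_sub_norm_le b a
        _ = ‖a - b‖ := norm_sub_rev b a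
    calc ‖bh - b‖ ≤ ‖bh - a‖ + ‖a - b‖ := by
          simpa using norm_sub_le_norm_sub_add_norm_sub bh a b
      _ ≤ ‖a - b‖ + ‖a - b‖ := by rw [h1]; linarith
      _ = 2 * ‖a - b‖ := by ring

theorem stmt4 {n : ℕ} (z v vh : Fin n → ℂ)
    (hz : ∀ i, ‖z i‖ = 1) (hvh : ∀ i, ‖vh i‖ = 1)
    (hproj : ∀ i, v i ≠ 0 → vh i = v i / (‖v i‖ : ℂ)) :
    Real.sqrt (∑ i, ‖vh i - z i‖ ^ 2)
      ≤ 2 * Real.sqrt (∑ i, ‖v i - z i‖ ^ 2) := by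
  have hsum : (∑ i, ‖vh i - z i‖ ^ 2) ≤ ∑ i, (2 * ‖v i - z i‖) ^ 2 := by
    apply Finset.sum_le_sum
    intro i _
    have := key_pointwise (v i) (z i) (vh i) (hz i) (hvh i) (hproj i)
    have h0 : (0:ℝ) ≤ ‖vh i - z i‖ := norm_nonneg _
    nlinarith [norm_nonneg (v i - z i)]
  have h4 : (∑ i, (2 * ‖v i - z i‖) ^ 2) = 4 * ∑ i, ‖v i - z i‖ ^ 2 := by
    rw [Finset.mul_sum]; congr 1; ext i; ring
  calc Real.sqrt (∑ i, ‖vh i - z i‖ ^ 2)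
      ≤ Real.sqrt (4 * ∑ i, ‖v i - z i‖ ^ 2) := by
        apply Real.sqrt_le_sqrt; rw [← h4]; exact hsum
    _ = 2 * Real.sqrt (∑ i, ‖v i - z i‖ ^ 2) := by
        rw [Real.sqrt_mul (by norm_num), show (4:ℝ) = 2^2 by norm_num,
          Real.sqrt_sq (by norm_num)]
end
end

section
/- For x ∈ ℂⁿ₁ and a Hermitian matrix M with M x having entries (Mx)_i, the following are equivalent: (a) for all i with (Mx)_i ≠ 0, x_i = (Mx)_i/|(Mx)_i|; (b) for all i, (Mx)_i · conj(x_i) = |(Mx)_i|; (c) x*Mx = ‖Mx‖₁. -/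
open Matrix Complex

noncomputable section

lemma aux_re_eq_abs {z : ℂ} (h : z.re = ‖z‖) : z = (‖z‖ : ℂ) := by
  have him : z.im = 0 := by
    have hsq := Complex.sq_norm z
    rw [Complex.normSq_apply, ← h] at hsq
    nlinarith [sq_nonneg z.im]
  apply Complex.ext
  · simpa using h
  · simpa using him

theorem stmt8 {n : ℕ} (M : Matrix (Fin n) (Fin n) ℂ) (hM : M.IsHermitian)
    (x : Fin n → ℂ) (hx : ∀ i, ‖x i‖ = 1) :
    ((∀ i, M.mulVec x i ≠ 0 → x i = M.mulVec x i / (‖M.mulVec x i‖ : ℂ)) ↔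
      (∀ i, M.mulVec x i * (starRingEnd ℂ) (x i) = (‖M.mulVec x i‖ : ℂ)))
    ∧ ((∀ i, M.mulVec x i * (starRingEnd ℂ) (x i) = (‖M.mulVec x i‖ : ℂ)) ↔
      star x ⬝ᵥ M.mulVec x = ((∑ i, ‖M.mulVec x i‖ : ℝ) : ℂ)) := by
  set y := M.mulVec x with hy
  constructor
  · constructor
    · intro h i
      by_cases hyi : y i = 0
      · simp [hyi]
      · have hx1 : (starRingEnd ℂ) (x i) * x i = 1 := by
          rw [mul_comm, Complex.mul_conj]
          norm_cast
          simp [Complex.sq_norm, hx i, Complex.normSq_eq_norm_sq]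
        have := h i hyi
        rw [this]
        have habs : (‖y i‖ : ℂ) ≠ 0 := by
          simpa using hyi
        rw [map_div₀]
        field_simp
        rw [Complex.mul_conj]
        norm_cast
        rw [Complex.normSq_eq_norm_sq]
        rw [Complex.conj_ofReal, Complex.ofReal_pow, pow_two, mul_div_assoc, div_self habs, mul_one]
    · intro h i hyi
      have := h i
      have hx1 : (starRingEnd ℂ) (x i) * x i = 1 := by
        rw [mul_comm, Complex.mul_conj]
        norm_cast
        simp [Complex.sq_norm, hx i, Complex.normSq_eq_norm_sq]
      have habs : (‖y i‖ : ℂ) ≠ 0 := by simpa using hyi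
      field_simp
      calc x i * (‖y i‖ : ℂ) = y i * ((starRingEnd ℂ) (x i) * x i) := by
            rw [← mul_assoc, this]; ring
        _ = y i := by rw [hx1, mul_one]
  · constructor
    · intro h
      simp only [dotProduct, Pi.star_apply]
      push_cast
      refine Finset.sum_congr rfl fun i _ => ?_
      rw [← h i, Complex.star_def]; ring
    · intro h i
      -- terms z i = y i * conj (x i), |z i| = |y i|
      have habs : ∀ j, ‖y j * (starRingEnd ℂ) (x j)‖ = ‖y j‖ := by
        intro j; rw [norm_mul]; simp [hx j]
      have hsum : ∑ j, (y j * (starRingEnd ℂ) (x j)).re = ∑ j, ‖y j‖ := by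
        have := congrArg Complex.re h
        simp only [dotProduct, Pi.star_apply, Complex.re_sum, Complex.ofReal_re,
          Complex.star_def] at this
        rw [← this]
        refine Finset.sum_congr rfl fun j _ => ?_
        congr 1; ring
      have hle : ∀ j ∈ Finset.univ, (y j * (starRingEnd ℂ) (x j)).re ≤ ‖y j‖ := by
        intro j _
        calc (y j * (starRingEnd ℂ) (x j)).re ≤ ‖y j * (starRingEnd ℂ) (x j)‖ :=
              Complex.re_le_norm _
          _ = ‖y j‖ := habs j
      have heach := (Finset.sum_eq_sum_iff_of_le hle).mp hsum i (Finset.mem_univ i)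
      have := aux_re_eq_abs (z := y i * (starRingEnd ℂ) (x i)) (by rw [habs i]; exact heach)
      rw [this, habs i]
end
end

section
/- For any x ∈ ℂⁿ₁ and positive semidefinite Hermitian M, with y = T(x) the entrywise phase normalization of Mx (keeping x_i where (Mx)_i = 0), one has y*My ≥ ‖Mx‖₁ ≥ x*Mx, with equality y*My = x*Mx only if y = x. -/
open Matrix Complex
open scoped ComplexOrder

noncomputable section

lemma herm_sym {n : ℕ} {M : Matrix (Fin n) (Fin n) ℂ} (hM : M.IsHermitian)
    (a b : Fin n → ℂ) : star a ⬝ᵥ M.mulVec b = star (star b ⬝ᵥ M.mulVec a) := by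
  rw [star_dotProduct]
  congr 1
  rw [star_mulVec, hM.eq, dotProduct_mulVec]

theorem stmt9 {n : ℕ} (M : Matrix (Fin n) (Fin n) ℂ) (hM : M.PosSemidef)
    (x y : Fin n → ℂ) (hx : ∀ i, ‖x i‖ = 1)
    (hy1 : ∀ i, M.mulVec x i ≠ 0 → y i = M.mulVec x i / (‖M.mulVec x i‖ : ℂ))
    (hy2 : ∀ i, M.mulVec x i = 0 → y i = x i) :
    (∑ i, ‖M.mulVec x i‖) ≤ (star y ⬝ᵥ M.mulVec y).re ∧
    (star x ⬝ᵥ M.mulVec x).re ≤ (∑ i, ‖M.mulVec x i‖) ∧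
    ((star y ⬝ᵥ M.mulVec y).re = (star x ⬝ᵥ M.mulVec x).re → y = x) := by
  set z := M.mulVec x with hz
  set s := ∑ i, ‖z i‖ with hs
  -- L1 : star y ⬝ᵥ z = s
  have L1 : star y ⬝ᵥ z = (s : ℂ) := by
    rw [hs, dotProduct]
    push_cast
    refine Finset.sum_congr rfl fun i _ => ?_
    by_cases h : z i = 0
    · simp [h]
    · rw [Pi.star_apply, hy1 i h]
      have habs : (‖z i‖ : ℂ) ≠ 0 := by
        simpa using h
      field_simp
      rw [star_div₀, Complex.star_def, Complex.conj_ofReal, ← mul_div_assoc,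
        Complex.mul_conj, Complex.normSq_eq_norm_sq]
      push_cast
      rw [sq, mul_div_assoc, div_self habs, mul_one]
  -- termwise bound for L2
  have hterm : ∀ i, ((starRingEnd ℂ) (x i) * z i).re ≤ ‖z i‖ := by
    intro i
    calc ((starRingEnd ℂ) (x i) * z i).re ≤ ‖(starRingEnd ℂ) (x i) * z i‖ :=
          Complex.re_le_norm _
      _ = ‖z i‖ := by rw [norm_mul, Complex.norm_conj, hx i, one_mul]
  have hxz : (star x ⬝ᵥ z).re = ∑ i, ((starRingEnd ℂ) (x i) * z i).re := by
    rw [dotProduct, Complex.re_sum]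
    rfl
  have L2 : (star x ⬝ᵥ z).re ≤ s := by
    rw [hxz]
    exact Finset.sum_le_sum fun i _ => hterm i
  -- expansion
  have hsym : (star x ⬝ᵥ M.mulVec y).re = (star y ⬝ᵥ z).re := by
    rw [hz, herm_sym hM.1 x y, Complex.star_def, Complex.conj_re]
  have hE : 0 ≤ (star y ⬝ᵥ M.mulVec y).re - 2 * s + (star x ⬝ᵥ z).re := by
    have h0 : 0 ≤ (star (y - x) ⬝ᵥ M.mulVec (y - x)).re := hM.re_dotProduct_nonneg (y - x)
    have hexp : (star (y - x) ⬝ᵥ M.mulVec (y - x)) =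
        star y ⬝ᵥ M.mulVec y - star y ⬝ᵥ z - star x ⬝ᵥ M.mulVec y + star x ⬝ᵥ z := by
      rw [hz]
      simp only [star_sub, sub_dotProduct, Matrix.mulVec_sub, dotProduct_sub]
      ring
    rw [hexp] at h0
    simp only [Complex.add_re, Complex.sub_re] at h0
    have : (star y ⬝ᵥ z).re = s := by rw [L1]; simp
    rw [this, hsym, this] at h0
    linarith
  refine ⟨by linarith, L2, fun heq => ?_⟩
  -- equality case
  have hcs : s ≤ (star x ⬝ᵥ z).re := by
    rw [heq] at hE; linarith
  have hse : (star x ⬝ᵥ z).re = s := le_antisymm L2 hcs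
  -- each term equality
  have hall : ∀ i ∈ Finset.univ, ‖z i‖ - ((starRingEnd ℂ) (x i) * z i).re = 0 := by
    rw [← Finset.sum_eq_zero_iff_of_nonneg (fun i _ => by linarith [hterm i])]
    rw [Finset.sum_sub_distrib, ← hxz, ← hs, hse, sub_self]
  funext i
  have hi : ((starRingEnd ℂ) (x i) * z i).re = ‖z i‖ := by
    have := hall i (Finset.mem_univ i); linarith
  by_cases h : z i = 0
  · exact hy2 i h
  · -- conj x i * z i = |z i| as a complex number
    have hw : (starRingEnd ℂ) (x i) * z i = (‖z i‖ : ℂ) := by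
      set w := (starRingEnd ℂ) (x i) * z i with hwdef
      have habsw : ‖w‖ = ‖z i‖ := by
        rw [hwdef, norm_mul, Complex.norm_conj, hx i, one_mul]
      have him : w.im = 0 := by
        have h1 : w.re ^ 2 + w.im ^ 2 = (‖w‖) ^ 2 := by
          rw [Complex.sq_norm, Complex.normSq_apply]; ring
        have h2 : w.re = ‖w‖ := by rw [habsw]; exact hi
        have h3 : w.im ^ 2 = 0 := by rw [h2] at h1; linarith
        exact pow_eq_zero_iff (n := 2) (by norm_num) |>.mp h3
      apply Complex.ext
      · simpa using hi.trans rfl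
      · simpa using him
    have hzx : z i = x i * (‖z i‖ : ℂ) := by
      have hx1 : (starRingEnd ℂ) (x i) * x i = 1 := by
        rw [mul_comm, Complex.mul_conj, Complex.normSq_eq_norm_sq, hx i]
        norm_num
      calc z i = (x i * (starRingEnd ℂ) (x i)) * z i := by
            rw [mul_comm (x i), hx1, one_mul]
        _ = x i * ((starRingEnd ℂ) (x i) * z i) := by ring
        _ = x i * (‖z i‖ : ℂ) := by rw [hw]
    have habs : (‖z i‖ : ℂ) ≠ 0 := by
      simpa using h
    rw [hy1 i h, div_eq_iff habs]
    exact hzx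
end
end

section
/- If x ∈ ℂⁿ₁ satisfies x*(C + αI)x = ‖(C + αI)x‖₁ (a fixed point of the generalized power method with shift α ≥ 0), where C = zz* + Δ, then |z*x| ≥ n − 4(‖Δ‖_op + α) or |z*x| ≤ 4(‖Δ‖_op + α). If ‖Δ‖_op + α < n/8, exactly one of these holds. -/
open scoped Matrix.Norms.L2Operator
open Matrix Complex

noncomputable section

theorem stmt10 {n : ℕ} (z x : Fin n → ℂ) (Δ : Matrix (Fin n) (Fin n) ℂ)
    (hΔ : Δ.IsHermitian) (α : ℝ) (hα : 0 ≤ α)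
    (hz : ∀ i, ‖z i‖ = 1) (hx : ∀ i, ‖x i‖ = 1)
    (C : Matrix (Fin n) (Fin n) ℂ) (hC : C = Matrix.vecMulVec z (star z) + Δ)
    (hfix : star x ⬝ᵥ (C + (α : ℂ) • 1).mulVec x
      = ((∑ i, ‖(C + (α : ℂ) • 1).mulVec x i‖ : ℝ) : ℂ)) :
    ((n : ℝ) - 4 * (‖Δ‖ + α) ≤ ‖star z ⬝ᵥ x‖ ∨
      ‖star z ⬝ᵥ x‖ ≤ 4 * (‖Δ‖ + α)) ∧
    (‖Δ‖ + α < (n : ℝ) / 8 →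
      Xor' ((n : ℝ) - 4 * (‖Δ‖ + α) ≤ ‖star z ⬝ᵥ x‖)
        (‖star z ⬝ᵥ x‖ ≤ 4 * (‖Δ‖ + α))) := by
  subst hC
  set s : ℂ := star z ⬝ᵥ x with hs
  set m : ℝ := ‖s‖ with hm
  set δ : ℝ := ‖Δ‖ + α with hδ
  have hδ0 : 0 ≤ δ := by positivity
  set v : Fin n → ℂ := fun i => Δ.mulVec x i + (α:ℂ) * x i with hv
  have h1 : ∀ i, ((Matrix.vecMulVec z (star z) + Δ) + (α:ℂ) • 1).mulVec x i
      = z i * s + v i := by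
    intro i
    simp [Matrix.add_mulVec, Matrix.smul_mulVec, Matrix.one_mulVec, Matrix.mulVec,
      Matrix.vecMulVec_apply, dotProduct, Pi.star_apply, add_mul, Finset.sum_add_distrib,
      Matrix.one_apply, Finset.mul_sum, mul_ite, Finset.sum_ite_eq, mul_assoc, v, s]
    ring
  set T : ℝ := ∑ i, ‖v i‖ with hT
  set S : ℝ := ∑ i, ‖((Matrix.vecMulVec z (star z) + Δ) + (α:ℂ) • 1).mulVec x i‖
    with hS
  have hxnorm : ‖(EuclideanSpace.equiv (Fin n) ℂ).symm x‖ = Real.sqrt n := by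
    rw [EuclideanSpace.norm_eq]
    norm_num [hx]
  have hΔx : Real.sqrt (∑ i, ‖Δ.mulVec x i‖ ^ 2) ≤ ‖Δ‖ * Real.sqrt n := by
    have h := Δ.l2_opNorm_mulVec ((EuclideanSpace.equiv (Fin n) ℂ).symm x)
    rw [hxnorm] at h
    refine le_trans (le_of_eq ?_) h
    rw [EuclideanSpace.norm_eq]
    simp
  have hnn : 0 ≤ ∑ i, ‖Δ.mulVec x i‖ ^ 2 :=
    Finset.sum_nonneg fun i _ => by positivity
  have h2 : (∑ i, ‖Δ.mulVec x i‖ ^ 2) ≤ ‖Δ‖ ^ 2 * n := by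
    have h' := mul_self_le_mul_self (Real.sqrt_nonneg _) hΔx
    rw [Real.mul_self_sqrt hnn] at h'
    nlinarith [Real.sq_sqrt (Nat.cast_nonneg (α := ℝ) n), Real.sqrt_nonneg (n:ℝ),
      norm_nonneg Δ]
  have hΔx1 : ∑ i, ‖Δ.mulVec x i‖ ≤ ‖Δ‖ * n := by
    have hcs := Finset.sum_mul_sq_le_sq_mul_sq Finset.univ
      (fun i => ‖Δ.mulVec x i‖) (fun _ => (1:ℝ))
    simp only [mul_one, one_pow, Finset.sum_const, Finset.card_univ, Fintype.card_fin,
      nsmul_eq_mul] at hcs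
    have hnn2 : 0 ≤ ∑ i, ‖Δ.mulVec x i‖ :=
      Finset.sum_nonneg fun i _ => by positivity
    have hsq : (∑ i, ‖Δ.mulVec x i‖) ^ 2 ≤ (‖Δ‖ * n) ^ 2 := by
      nlinarith [mul_le_mul_of_nonneg_right h2 (Nat.cast_nonneg (α := ℝ) n)]
    have h' := Real.sqrt_le_sqrt hsq
    rwa [Real.sqrt_sq hnn2, Real.sqrt_sq (by positivity)] at h'
  have hTle : T ≤ δ * n := by
    have hle : T ≤ ∑ i, (‖Δ.mulVec x i‖ + α * ‖x i‖) := by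
      refine Finset.sum_le_sum fun i _ => ?_
      refine le_trans (norm_add_le _ _) ?_
      rw [norm_mul, Complex.norm_real, Real.norm_eq_abs, _root_.abs_of_nonneg hα]
    rw [Finset.sum_add_distrib] at hle
    have h3 : ∑ i, α * ‖x i‖ = α * n := by
      simp [hx, Finset.mul_sum, mul_comm]
    rw [h3] at hle
    calc T ≤ ∑ i, ‖Δ.mulVec x i‖ + α * n := hle
      _ ≤ ‖Δ‖ * n + α * n := by linarith [hΔx1]
      _ = δ * n := by rw [hδ]; ring
  have hSlow : (n:ℝ) * m - T ≤ S := by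
    have hterm : ∀ i, m - ‖v i‖ ≤
        ‖((Matrix.vecMulVec z (star z) + Δ) + (α:ℂ) • 1).mulVec x i‖ := by
      intro i
      rw [h1 i]
      have habs : ‖z i * s‖ = m := by
        rw [norm_mul, hz i, one_mul]
      have htri : ‖z i * s‖ ≤ ‖z i * s + v i‖ + ‖v i‖ := by
        simpa using norm_sub_le (z i * s + v i) (v i)
      linarith [htri, habs.ge]
    calc (n:ℝ) * m - T = (∑ _i : Fin n, m) - T := by simp [Finset.sum_const, mul_comm]
      _ = ∑ i, (m - ‖v i‖) := by rw [Finset.sum_sub_distrib]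
      _ ≤ S := Finset.sum_le_sum fun i _ => hterm i
  have hquad : star x ⬝ᵥ ((Matrix.vecMulVec z (star z) + Δ) + (α:ℂ) • 1).mulVec x
      = ((m^2 : ℝ) : ℂ) + ∑ i, (starRingEnd ℂ) (x i) * v i := by
    rw [dotProduct]
    simp only [Pi.star_apply, RCLike.star_def, h1]
    rw [show ∀ f g : Fin n → ℂ, ∑ i, ((starRingEnd ℂ) (x i) * (f i + g i))
        = ∑ i, (starRingEnd ℂ) (x i) * f i + ∑ i, (starRingEnd ℂ) (x i) * g i from
      fun f g => by rw [← Finset.sum_add_distrib]; exact Finset.sum_congr rfl fun i _ => by ring]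
    congr 1
    have hsum : ∑ i, (starRingEnd ℂ) (x i) * (z i * s) = (starRingEnd ℂ) s * s := by
      rw [hs, dotProduct, map_sum, Finset.sum_mul]
      refine Finset.sum_congr rfl fun i _ => ?_
      simp only [_root_.map_mul, Pi.star_apply, RCLike.star_def, Complex.conj_conj]
      ring
    rw [hsum, Complex.conj_mul']
    norm_cast
  have hSup : S ≤ m^2 + T := by
    have hw : ‖∑ i, (starRingEnd ℂ) (x i) * v i‖ ≤ T := by
      refine le_trans (norm_sum_le _ _) (le_of_eq ?_)
      rw [hT]
      refine Finset.sum_congr rfl fun i _ => ?_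
      rw [norm_mul, Complex.norm_conj, hx i, one_mul]
    have heq : ((S : ℝ) : ℂ) = ((m^2 : ℝ) : ℂ) + ∑ i, (starRingEnd ℂ) (x i) * v i := by
      rw [← hfix, hquad]
    have hw2 : ∑ i, (starRingEnd ℂ) (x i) * v i = ((S - m^2 : ℝ) : ℂ) := by
      push_cast at heq ⊢
      linear_combination -heq
    rw [hw2, Complex.norm_real, Real.norm_eq_abs] at hw
    have := abs_le.mp hw
    linarith [this.2]
  have hmn : m ≤ n := by
    rw [hm, hs, dotProduct]
    refine le_trans (norm_sum_le _ _) ?_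
    have hb : ∀ i, ‖star z i * x i‖ = 1 := fun i => by
      simp [norm_mul, Complex.norm_conj, hz i, hx i]
    simp [norm_mul, Complex.norm_conj, hz, hx]
  have hm0 : 0 ≤ m := norm_nonneg _
  have key : (n:ℝ) * m - 2 * δ * n ≤ m^2 := by linarith
  have main : (n : ℝ) - 4 * δ ≤ m ∨ m ≤ 4 * δ := by
    by_contra hcon
    push_neg at hcon
    obtain ⟨h1', h2'⟩ := hcon
    nlinarith [mul_pos (by linarith : (0:ℝ) < m - 4*δ) (by linarith : (0:ℝ) < (n:ℝ) - 4*δ - m)]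
  refine ⟨main, fun h8 => ?_⟩
  have hnb : ¬((n : ℝ) - 4 * δ ≤ m ∧ m ≤ 4 * δ) := by
    rintro ⟨ha, hb⟩
    linarith
  rcases main with h | h
  · exact Or.inl ⟨h, fun h' => hnb ⟨h, h'⟩⟩
  · exact Or.inr ⟨h, fun h' => hnb ⟨h', h⟩⟩
end
end

section
/- Suppose x ∈ ℂⁿ₁ satisfies x*Cx = ‖Cx‖₁ where C = zz* + Δ. Then |z*x|·(n − |z*x|) ≤ 2n‖Δ‖_op. -/
open scoped Matrix.Norms.L2Operator
open Matrix Complex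

noncomputable section

theorem stmt11 {n : ℕ} (z x : Fin n → ℂ) (Δ : Matrix (Fin n) (Fin n) ℂ)
    (hΔ : Δ.IsHermitian)
    (hz : ∀ i, ‖z i‖ = 1) (hx : ∀ i, ‖x i‖ = 1)
    (C : Matrix (Fin n) (Fin n) ℂ) (hC : C = Matrix.vecMulVec z (star z) + Δ)
    (hfix : star x ⬝ᵥ C.mulVec x = ((∑ i, ‖C.mulVec x i‖ : ℝ) : ℂ)) :
    ‖star z ⬝ᵥ x‖ * ((n : ℝ) - ‖star z ⬝ᵥ x‖) ≤ 2 * n * ‖Δ‖ := by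
  classical
  set s : ℂ := star z ⬝ᵥ x with hs
  set a : ℝ := ‖s‖ with ha
  set w : Fin n → ℂ := Δ.mulVec x with hw
  -- Step A: coordinates of C x
  have hCx : ∀ i, C.mulVec x i = z i * s + w i := by
    intro i
    simp only [hC, Matrix.add_mulVec, Pi.add_apply, hw, hs]
    congr 1
    simp only [Matrix.mulVec, dotProduct, Matrix.vecMulVec, Matrix.of_apply, Pi.star_apply]
    rw [Finset.mul_sum]
    exact Finset.sum_congr rfl fun j _ => by ring
  -- Step B: x* C x = |s|^2 + x* w
  have hB : star x ⬝ᵥ C.mulVec x = ((a ^ 2 : ℝ) : ℂ) + star x ⬝ᵥ w := by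
    have h1 : star x ⬝ᵥ C.mulVec x = (starRingEnd ℂ) s * s + star x ⬝ᵥ w := by
      simp only [dotProduct, hCx, Pi.star_apply, mul_add]
      rw [Finset.sum_add_distrib]
      congr 1
      have hcs : (starRingEnd ℂ) s = ∑ i, star (x i) * z i := by
        simp [hs, dotProduct, map_sum, mul_comm]
      rw [hcs, Finset.sum_mul]
      exact Finset.sum_congr rfl fun i _ => by ring
    rw [h1]
    congr 1
    rw [mul_comm, Complex.mul_conj']
    norm_cast
  -- Step C: lower bound on the ℓ1 norm of C x
  have hL : (n : ℝ) * a - (∑ i, ‖w i‖) ≤ ∑ i, ‖C.mulVec x i‖ := by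
    have key : ∀ i, a - ‖w i‖ ≤ ‖C.mulVec x i‖ := by
      intro i
      rw [hCx i]
      have h2 : ‖z i * s‖ = a := by
        rw [norm_mul, hz i, one_mul]
      have h3 : ‖z i * s‖ ≤ ‖z i * s + w i‖ + ‖w i‖ := by
        have := norm_add_le (z i * s + w i) (-(w i))
        simpa using this
      linarith [h2 ▸ h3]
    calc (n : ℝ) * a - (∑ i, ‖w i‖)
        = ∑ _i : Fin n, a - ∑ i, ‖w i‖ := by
          simp [Finset.sum_const, nsmul_eq_mul]
      _ = ∑ i : Fin n, (a - ‖w i‖) := by rw [Finset.sum_sub_distrib]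
      _ ≤ ∑ i, ‖C.mulVec x i‖ := Finset.sum_le_sum fun i _ => key i
  -- Step D: take real parts of the fixed point equation
  have hD : a ^ 2 + (star x ⬝ᵥ w).re = ∑ i, ‖C.mulVec x i‖ := by
    have h := congrArg Complex.re (hB.symm.trans hfix)
    simp only [Complex.add_re, Complex.ofReal_re] at h
    exact h
  -- Euclidean norms
  set xE : EuclideanSpace ℂ (Fin n) := (WithLp.equiv 2 _).symm x with hxE
  set wE : EuclideanSpace ℂ (Fin n) := (WithLp.equiv 2 _).symm w with hwE
  have hxEi : ∀ i, xE i = x i := fun i => rfl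
  have hwEi : ∀ i, wE i = w i := fun i => rfl
  have hnx : ‖xE‖ = Real.sqrt n := by
    rw [EuclideanSpace.norm_eq]
    have h1 : ∀ i : Fin n, ‖xE i‖ ^ 2 = 1 := by
      intro i
      rw [hxEi, hx i]; norm_num
    rw [Finset.sum_congr rfl fun i _ => h1 i]
    simp
  have hwE2 : ‖wE‖ ^ 2 = ∑ i, ‖w i‖ ^ 2 := by
    rw [EuclideanSpace.norm_eq, Real.sq_sqrt (Finset.sum_nonneg fun i _ => sq_nonneg _)]
    exact Finset.sum_congr rfl fun i _ => by rw [hwEi]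
  have hnw : ‖wE‖ ≤ ‖Δ‖ * Real.sqrt n := by
    have := Matrix.l2_opNorm_mulVec Δ xE
    rw [hnx] at this
    exact this
  have hsq : Real.sqrt n * Real.sqrt n = (n : ℝ) :=
    Real.mul_self_sqrt (Nat.cast_nonneg n)
  have hΔ0 : (0:ℝ) ≤ ‖Δ‖ := norm_nonneg _
  have hwE0 : (0:ℝ) ≤ ‖wE‖ := norm_nonneg _
  have hsn0 : (0:ℝ) ≤ Real.sqrt n := Real.sqrt_nonneg n
  -- |x* w| ≤ n ‖Δ‖
  have hinner : ‖star x ⬝ᵥ w‖ ≤ (n : ℝ) * ‖Δ‖ := by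
    have h1 : ‖(inner ℂ xE wE)‖ ≤ ‖xE‖ * ‖wE‖ := norm_inner_le_norm xE wE
    have h2 : (inner ℂ xE wE) = star x ⬝ᵥ w := by
      rw [EuclideanSpace.inner_eq_star_dotProduct, dotProduct_comm]
      rfl
    rw [h2, hnx] at h1
    nlinarith
  -- ℓ1 norm of w ≤ n ‖Δ‖
  have hnn : (0:ℝ) ≤ ∑ i, ‖w i‖ :=
    Finset.sum_nonneg fun i _ => norm_nonneg _
  have hl1 : (∑ i, ‖w i‖) ≤ (n : ℝ) * ‖Δ‖ := by
    have hcs : (∑ i, ‖w i‖) ^ 2 ≤ (n : ℝ) * ‖wE‖ ^ 2 := by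
      have h := Finset.sum_mul_sq_le_sq_mul_sq Finset.univ
        (fun i : Fin n => ‖w i‖) (fun _ => (1:ℝ))
      simp only [mul_one, one_pow] at h
      calc (∑ i, ‖w i‖) ^ 2
          ≤ (∑ i, ‖w i‖ ^ 2) * (∑ _i : Fin n, (1:ℝ)) := h
        _ = (n : ℝ) * ‖wE‖ ^ 2 := by
            rw [hwE2]
            simp [mul_comm]
    have h5 : ‖wE‖ ^ 2 ≤ (‖Δ‖ * Real.sqrt n) ^ 2 := by nlinarith
    have h6 : (∑ i, ‖w i‖) ^ 2 ≤ ((n:ℝ) * ‖Δ‖) ^ 2 := by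
      have h5' : (n:ℝ) * ‖wE‖ ^ 2 ≤ (n:ℝ) * ((‖Δ‖ * Real.sqrt n) ^ 2) :=
        mul_le_mul_of_nonneg_left h5 (Nat.cast_nonneg n)
      have hsq2 : Real.sqrt n ^ 2 = (n:ℝ) := Real.sq_sqrt (Nat.cast_nonneg n)
      calc (∑ i, ‖w i‖) ^ 2 ≤ (n:ℝ) * ‖wE‖ ^ 2 := hcs
        _ ≤ (n:ℝ) * ((‖Δ‖ * Real.sqrt n) ^ 2) := h5'
        _ = ((n:ℝ) * ‖Δ‖) ^ 2 := by rw [mul_pow, hsq2]; ring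
    have h7 := Real.sqrt_le_sqrt h6
    rwa [Real.sqrt_sq hnn, Real.sqrt_sq (by positivity)] at h7
  -- assemble
  have hre : (star x ⬝ᵥ w).re ≤ ‖star x ⬝ᵥ w‖ := Complex.re_le_norm _
  have hgoal : a * ((n : ℝ) - a) = (n:ℝ) * a - a ^ 2 := by ring
  rw [ha] at hgoal
  rw [hgoal]
  linarith [hD, hL, hinner, hl1, hre]
end
end

section
/- Let x ∈ ℂⁿ₁ with z*x = |z*x| ≥ n − 8‖Δ‖_op and (Cx)_i conj(x_i) = |(Cx)_i| for all i, where C = zz* + Δ + αI with 0 ≤ α ≤ ‖Δ‖_op. Then for any u ∈ ℂⁿ with u*x = 0, u*S u ≥ ‖u‖₂²(n − 27‖Δ‖_op − ‖Δx‖_∞), where S = ddiag(Cxx*) − C. -/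
open scoped Matrix.Norms.L2Operator
open Matrix Complex

noncomputable section

theorem stmt13 {n : ℕ} (hn : 0 < n) (z x u : Fin n → ℂ) (Δ : Matrix (Fin n) (Fin n) ℂ)
    (hΔ : Δ.IsHermitian) (α : ℝ) (hα0 : 0 ≤ α) (hα : α ≤ ‖Δ‖)
    (hz : ∀ i, ‖z i‖ = 1) (hx : ∀ i, ‖x i‖ = 1)
    (C : Matrix (Fin n) (Fin n) ℂ)
    (hC : C = Matrix.vecMulVec z (star z) + Δ + (α : ℂ) • 1)
    (hcorr1 : star z ⬝ᵥ x = (‖star z ⬝ᵥ x‖ : ℂ))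
    (hcorr2 : (n : ℝ) - 8 * ‖Δ‖ ≤ ‖star z ⬝ᵥ x‖)
    (hfix : ∀ i, C.mulVec x i * (starRingEnd ℂ) (x i) = (‖C.mulVec x i‖ : ℂ))
    (hperp : star u ⬝ᵥ x = 0) :
    (∑ i, ‖u i‖ ^ 2) *
        ((n : ℝ) - 27 * ‖Δ‖ - ⨆ i, ‖Δ.mulVec x i‖)
      ≤ (star u ⬝ᵥ (Matrix.diagonal (fun i => C.mulVec x i * (starRingEnd ℂ) (x i)) - C).mulVec
          u).re := by
  have hNe : Nonempty (Fin n) := ⟨⟨0, hn⟩⟩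
  set K := ‖Δ‖ with hKdef
  have hK0 : (0:ℝ) ≤ K := norm_nonneg _
  set A := ‖star z ⬝ᵥ x‖ with hAdef
  set N := ∑ i, ‖u i‖ ^ 2 with hNdef
  set M := ⨆ i, ‖Δ.mulVec x i‖ with hMdef
  have hN0 : (0:ℝ) ≤ N := Finset.sum_nonneg fun i _ => by positivity
  have hn' : (0:ℝ) < n := by exact_mod_cast hn
  have hA0 : (0:ℝ) ≤ A := norm_nonneg _
  -- helper: |a| - |b| ≤ |a + b|
  have habs_lb : ∀ a b : ℂ, ‖a‖ - ‖b‖ ≤ ‖a + b‖ := by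
    intro a b
    have h := norm_add_le (a + b) (-b)
    simp only [add_neg_cancel_right, norm_neg] at h
    linarith
  have hkey : ∀ (r : ℝ) (a : ℂ), ((starRingEnd ℂ) a * ((r : ℂ) * a)).re
      = r * ‖a‖ ^ 2 := by
    intro r a
    have h : (starRingEnd ℂ) a * ((r : ℂ) * a) = ((r * ‖a‖ ^ 2 : ℝ) : ℂ) := by
      push_cast
      rw [← Complex.mul_conj' a]
      ring
    rw [h, Complex.ofReal_re]
  -- mulVec expansion for C
  have hCmul : ∀ v : Fin n → ℂ,
      C.mulVec v = (star z ⬝ᵥ v) • z + Δ.mulVec v + (α : ℂ) • v := by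
    intro v
    rw [hC, Matrix.add_mulVec, Matrix.add_mulVec, Matrix.smul_mulVec,
      Matrix.one_mulVec]
    congr 2
    funext i
    simp only [Matrix.mulVec, Matrix.vecMulVec_apply, dotProduct, Pi.smul_apply,
      smul_eq_mul, Finset.sum_mul, Finset.mul_sum, Pi.star_apply]
    refine Finset.sum_congr rfl fun j _ => by ring
  -- conj of dot products
  have hconj : ∀ a b : Fin n → ℂ, star a ⬝ᵥ b = (starRingEnd ℂ) (star b ⬝ᵥ a) := by
    intro a b
    rw [dotProduct, dotProduct, map_sum]
    refine Finset.sum_congr rfl fun j _ => ?_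
    simp only [Pi.star_apply, Complex.star_def, RingHom.map_mul, Complex.conj_conj]
    ring
  -- star u ⬝ᵥ u = N
  have hNu : star u ⬝ᵥ u = ((N : ℝ) : ℂ) := by
    rw [hNdef, dotProduct, Complex.ofReal_sum]
    refine Finset.sum_congr rfl fun i _ => ?_
    rw [Complex.ofReal_pow, ← Complex.mul_conj' (u i)]
    simp only [Pi.star_apply, Complex.star_def]
    ring
  -- Euclidean space setup
  set eq2 : (Fin n → ℂ) → EuclideanSpace ℂ (Fin n) := ⇑(WithLp.equiv 2 (Fin n → ℂ)).symm
    with heq2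
  have hinner : ∀ a b : Fin n → ℂ, (inner ℂ (eq2 a) (eq2 b) : ℂ) = star a ⬝ᵥ b := by
    intro a b
    rw [heq2, EuclideanSpace.inner_eq_star_dotProduct]
    simp [dotProduct_comm]
  have hnormsq : ∀ a : Fin n → ℂ, ‖eq2 a‖ ^ 2 = ∑ i, ‖a i‖ ^ 2 := by
    intro a
    rw [EuclideanSpace.norm_eq, Real.sq_sqrt (Finset.sum_nonneg fun i _ => sq_nonneg _)]
    exact Finset.sum_congr rfl fun i _ => by
      rw [heq2]; rfl
  have hnormu : ‖eq2 u‖ ^ 2 = N := hnormsq u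
  -- bound 2 : re (u* Δ u) ≤ K * N
  have bound2 : (star u ⬝ᵥ Δ.mulVec u).re ≤ K * N := by
    have h1 : (star u ⬝ᵥ Δ.mulVec u).re ≤ ‖star u ⬝ᵥ Δ.mulVec u‖ :=
      Complex.re_le_norm _
    have h2 : ‖star u ⬝ᵥ Δ.mulVec u‖ = ‖(inner ℂ (eq2 u) (eq2 (Δ.mulVec u)) : ℂ)‖ := by
      rw [hinner]
    have h3 : ‖(inner ℂ (eq2 u) (eq2 (Δ.mulVec u)) : ℂ)‖ ≤ ‖eq2 u‖ * ‖eq2 (Δ.mulVec u)‖ :=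
      norm_inner_le_norm _ _
    have h4 : ‖eq2 (Δ.mulVec u)‖ ≤ K * ‖eq2 u‖ := Matrix.l2_opNorm_mulVec Δ (eq2 u)
    have h5 : ‖eq2 u‖ * ‖eq2 (Δ.mulVec u)‖ ≤ ‖eq2 u‖ * (K * ‖eq2 u‖) :=
      mul_le_mul_of_nonneg_left h4 (norm_nonneg _)
    nlinarith [norm_nonneg (eq2 u), hnormu]
  -- A ≤ n
  have hAn : A ≤ (n : ℝ) := by
    have h2 : ∀ i : Fin n, ‖(star z) i * x i‖ = 1 := by
      intro i
      simp only [Pi.star_apply, Complex.star_def, norm_mul, Complex.norm_conj,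
        hz i, hx i, mul_one]
    calc A = ‖star z ⬝ᵥ x‖ := hAdef
    _ ≤ ∑ i, ‖(star z) i * x i‖ := by
        rw [dotProduct]; exact norm_sum_le _ _
    _ = (n : ℝ) := by simp [hz, hx]
  -- bound 3 : |z* u|^2 ≤ 16 K N
  have bound3 : ‖star z ⬝ᵥ u‖ ^ 2 ≤ 16 * K * N := by
    set s : ℂ := star x ⬝ᵥ z with hsdef
    have hsA : ‖s‖ = A := by
      rw [hsdef, hconj x z, Complex.norm_conj]
    set c : ℂ := s / (n : ℂ) with hcdef
    have hxu : star x ⬝ᵥ u = 0 := by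
      rw [hconj x u, hperp]; simp
    have hiw : (inner ℂ (eq2 z - c • eq2 x) (eq2 u) : ℂ) = star z ⬝ᵥ u := by
      rw [inner_sub_left, inner_smul_left, hinner, hinner, hxu]
      simp
    have hnz : ‖eq2 z‖ ^ 2 = (n : ℝ) := by
      rw [hnormsq]
      have h1 : ∀ i : Fin n, ‖z i‖ ^ 2 = 1 := fun i => by rw [hz i]; norm_num
      simp [h1]
    have hnx : ‖eq2 x‖ ^ 2 = (n : ℝ) := by
      rw [hnormsq]
      have h1 : ∀ i : Fin n, ‖x i‖ ^ 2 = 1 := fun i => by rw [hx i]; norm_num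
      simp [h1]
    have hizx : (inner ℂ (eq2 z) (eq2 x) : ℂ) = (starRingEnd ℂ) s := by
      rw [hinner, hsdef, ← hconj]
    have hcs : c * (starRingEnd ℂ) s = ((A ^ 2 / n : ℝ) : ℂ) := by
      rw [hcdef, div_mul_eq_mul_div]
      rw [show s * (starRingEnd ℂ) s = ((A ^ 2 : ℝ) : ℂ) by
        rw [Complex.mul_conj' s, ← hsA]; push_cast; ring]
      push_cast
      ring
    have hw2 : ‖eq2 z - c • eq2 x‖ ^ 2 = (n : ℝ) - A ^ 2 / n := by
      rw [norm_sub_sq (𝕜 := ℂ), inner_smul_right, hizx, hcs, norm_smul, mul_pow, hnz, hnx]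
      have habsc : ‖c‖ ^ 2 = A ^ 2 / n ^ 2 := by
        rw [hcdef, norm_div, div_pow, hsA]
        norm_num
      rw [habsc]
      simp only [Complex.ofReal_re, RCLike.re_to_complex]
      field_simp
      ring
    have hcs2 : ‖star z ⬝ᵥ u‖ ≤ ‖eq2 z - c • eq2 x‖ * ‖eq2 u‖ := by
      rw [← hiw]
      exact norm_inner_le_norm _ _
    have h16 : (n : ℝ) - A ^ 2 / n ≤ 16 * K := by
      have heq : (n : ℝ) - A ^ 2 / n = ((n : ℝ) ^ 2 - A ^ 2) / n := by field_simp
      rw [heq, div_le_iff₀ hn']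
      nlinarith
    have hsq : ‖star z ⬝ᵥ u‖ ^ 2 ≤ ((n : ℝ) - A ^ 2 / n) * N := by
      calc ‖star z ⬝ᵥ u‖ ^ 2
          ≤ (‖eq2 z - c • eq2 x‖ * ‖eq2 u‖) ^ 2 :=
            pow_le_pow_left₀ (norm_nonneg _) hcs2 2
        _ = ‖eq2 z - c • eq2 x‖ ^ 2 * ‖eq2 u‖ ^ 2 := by ring
        _ = ((n : ℝ) - A ^ 2 / n) * N := by rw [hw2, hnormu]
    exact hsq.trans (mul_le_mul_of_nonneg_right h16 hN0)
  -- pointwise lower bound on |(Cx)_i|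
  have hMb : ∀ i, ‖Δ.mulVec x i‖ ≤ M :=
    fun i => le_ciSup (f := fun j => ‖Δ.mulVec x j‖)
      (Set.Finite.bddAbove (Set.finite_range _)) i
  have hCx_lb : ∀ i, A - M - α ≤ ‖C.mulVec x i‖ := by
    intro i
    have h1 : C.mulVec x i = (star z ⬝ᵥ x) * z i + (Δ.mulVec x i + (α : ℂ) * x i) := by
      rw [hCmul x]
      simp only [Pi.add_apply, Pi.smul_apply, smul_eq_mul]
      ring
    have h2 : ‖(star z ⬝ᵥ x) * z i‖ = A := by
      rw [norm_mul, hz i, ← hAdef, mul_one]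
    have h3 : ‖Δ.mulVec x i + (α : ℂ) * x i‖ ≤ M + α := by
      calc ‖Δ.mulVec x i + (α : ℂ) * x i‖
          ≤ ‖Δ.mulVec x i‖ + ‖(α : ℂ) * x i‖ := norm_add_le _ _
        _ ≤ M + α := by
            rw [norm_mul, hx i, mul_one, Complex.norm_real, Real.norm_of_nonneg hα0]
            exact add_le_add_left (hMb i) _
    have := habs_lb ((star z ⬝ᵥ x) * z i) (Δ.mulVec x i + (α : ℂ) * x i)
    rw [← h1, h2] at this
    linarith
  -- bound 1 : sum of diagonal terms
  have bound1 : (A - M - α) * N ≤ ∑ i, ‖C.mulVec x i‖ * ‖u i‖ ^ 2 := by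
    rw [hNdef, Finset.mul_sum]
    refine Finset.sum_le_sum fun i _ => ?_
    exact mul_le_mul_of_nonneg_right (hCx_lb i) (by positivity)
  -- the main re decomposition
  have hdiag : (star u ⬝ᵥ (Matrix.diagonal
      (fun i => C.mulVec x i * (starRingEnd ℂ) (x i))).mulVec u).re
      = ∑ i, ‖C.mulVec x i‖ * ‖u i‖ ^ 2 := by
    rw [dotProduct]
    rw [Complex.re_sum]
    refine Finset.sum_congr rfl fun i _ => ?_
    rw [Matrix.mulVec_diagonal, hfix i]
    exact hkey _ _
  have hCpart : (star u ⬝ᵥ C.mulVec u).re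
      = ‖star z ⬝ᵥ u‖ ^ 2 + (star u ⬝ᵥ Δ.mulVec u).re + α * N := by
    rw [hCmul u, dotProduct_add, dotProduct_add, dotProduct_smul,
      dotProduct_smul, hNu]
    have h1 : star u ⬝ᵥ z = (starRingEnd ℂ) (star z ⬝ᵥ u) := hconj u z
    rw [smul_eq_mul, smul_eq_mul, h1,
      show (star z ⬝ᵥ u) * (starRingEnd ℂ) (star z ⬝ᵥ u)
          = ((‖star z ⬝ᵥ u‖ ^ 2 : ℝ) : ℂ) by
        rw [Complex.mul_conj']; push_cast; ring]
    simp [Complex.add_re, Complex.mul_re, ← Complex.ofReal_pow]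
  have hmain : (star u ⬝ᵥ (Matrix.diagonal (fun i => C.mulVec x i * (starRingEnd ℂ) (x i))
      - C).mulVec u).re
      = (∑ i, ‖C.mulVec x i‖ * ‖u i‖ ^ 2)
        - (‖star z ⬝ᵥ u‖ ^ 2 + (star u ⬝ᵥ Δ.mulVec u).re + α * N) := by
    rw [Matrix.sub_mulVec, dotProduct_sub, Complex.sub_re, hdiag, hCpart]
  rw [hmain]
  nlinarith [mul_le_mul_of_nonneg_left hcorr2 hN0, mul_le_mul_of_nonneg_left hα hN0]
end
end

section
/- x ∈ ℂⁿ₁ is a first-order critical point of f(x) = x*Cx on ℂⁿ₁ (i.e., S(x)x = 0 where S(x) = Re{ddiag(Cxx*)} − C) if and only if the diagonal of Cxx* is real, i.e., (Cx)_i conj(x_i) ∈ ℝ for all i. -/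
open Matrix Complex

noncomputable section

theorem stmt14 {n : ℕ} (C : Matrix (Fin n) (Fin n) ℂ) (hC : C.IsHermitian)
    (x : Fin n → ℂ) (hx : ∀ i, ‖x i‖ = 1) :
    (Matrix.diagonal (fun i => ((C.mulVec x i * (starRingEnd ℂ) (x i)).re : ℂ)) - C).mulVec x = 0
      ↔ ∀ i, (C.mulVec x i * (starRingEnd ℂ) (x i)).im = 0 := by
  have hx1 : ∀ i, x i * (starRingEnd ℂ) (x i) = 1 := by
    intro i
    rw [Complex.mul_conj, Complex.normSq_eq_norm_sq, hx i]
    norm_num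
  have hxne : ∀ i, x i ≠ 0 := by
    intro i h
    have := hx i
    rw [h] at this
    simp at this
  have hCx : ∀ i, C.mulVec x i = (C.mulVec x i * (starRingEnd ℂ) (x i)) * x i := by
    intro i
    rw [mul_assoc, mul_comm ((starRingEnd ℂ) (x i)), hx1 i, mul_one]
  rw [funext_iff]
  constructor
  · intro h i
    have hi := h i
    rw [Matrix.sub_mulVec, Pi.sub_apply, Matrix.mulVec_diagonal, Pi.zero_apply] at hi
    set z := C.mulVec x i * (starRingEnd ℂ) (x i) with hz
    rw [hCx i, ← hz] at hi
    have h2 : ((z.re : ℂ) - z) * x i = 0 := by linear_combination hi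
    rcases mul_eq_zero.mp h2 with h3 | h3
    · have h4 : (z.re : ℂ) = z := sub_eq_zero.mp h3
      have := congrArg Complex.im h4
      simpa using this.symm
    · exact absurd h3 (hxne i)
  · intro h i
    rw [Matrix.sub_mulVec, Pi.sub_apply, Matrix.mulVec_diagonal, Pi.zero_apply]
    set z := C.mulVec x i * (starRingEnd ℂ) (x i) with hz
    have h4 : (z.re : ℂ) = z := by
      apply Complex.ext <;> simp [hz, h i]
    rw [h4, hz, ← hCx i, sub_self]
end
end

section
/- Let x ∈ ℂⁿ₁ satisfy the second-order condition: ⟨ẋ, S(x)ẋ⟩ ≥ 0 for all ẋ with Re(ẋ_i conj(x_i)) = 0 for all i, where S(x) = Re{ddiag(Cxx*)} − C. If diag(C) ≥ 0, then (Cx)_i conj(x_i) ≥ C_{ii} ≥ 0 for all i; if moreover x is first-order critical, then x*Cx = ‖Cx‖₁. -/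
open Matrix Complex

noncomputable section

theorem stmt15 {n : ℕ} (C : Matrix (Fin n) (Fin n) ℂ) (hC : C.IsHermitian)
    (hdiag : ∀ i, 0 ≤ (C i i).re)
    (x : Fin n → ℂ) (hx : ∀ i, ‖x i‖ = 1)
    (S : Matrix (Fin n) (Fin n) ℂ)
    (hS : S = Matrix.diagonal (fun i => ((C.mulVec x i * (starRingEnd ℂ) (x i)).re : ℂ)) - C)
    (hsoc : ∀ xd : Fin n → ℂ, (∀ i, (xd i * (starRingEnd ℂ) (x i)).re = 0) →
      0 ≤ (star xd ⬝ᵥ S.mulVec xd).re) :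
    (∀ i, (C i i).re ≤ (C.mulVec x i * (starRingEnd ℂ) (x i)).re) ∧
    (S.mulVec x = 0 →
      star x ⬝ᵥ C.mulVec x = ((∑ i, ‖C.mulVec x i‖ : ℝ) : ℂ)) := by
  have hnorm : ∀ i, (starRingEnd ℂ) (x i) * x i = 1 := by
    intro i
    rw [mul_comm, Complex.mul_conj]
    norm_cast
    rw [Complex.normSq_eq_norm_sq, hx i]; norm_num
  have part1 : ∀ i, (C i i).re ≤ (C.mulVec x i * (starRingEnd ℂ) (x i)).re := by
    intro i
    set xd : Fin n → ℂ := fun j => if j = i then Complex.I * x i else 0 with hxd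
    have hcond : ∀ j, (xd j * (starRingEnd ℂ) (x j)).re = 0 := by
      intro j
      by_cases hji : j = i
      · subst hji
        simp only [hxd, if_pos rfl, mul_assoc]
        rw [mul_comm (x j), hnorm j, mul_one]
        simp
      · simp [hxd, hji]
    have h0 := hsoc xd hcond
    have key : star xd ⬝ᵥ S.mulVec xd = star (Complex.I * x i) * (S i i * (Complex.I * x i)) := by
      simp only [dotProduct, mulVec, hxd, Pi.star_apply, mul_ite, mul_zero,
        Finset.sum_ite_eq', Finset.mem_univ, if_true, apply_ite (star : ℂ → ℂ),
        star_zero, ite_mul, zero_mul]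
    have hSii : S i i = (((C.mulVec x i * (starRingEnd ℂ) (x i)).re : ℂ)) - C i i := by
      rw [hS]; simp [Matrix.sub_apply]
    have expand : star (Complex.I * x i) * (S i i * (Complex.I * x i))
        = -(Complex.I * Complex.I) * ((starRingEnd ℂ) (x i) * x i) * S i i := by
      simp only [star_mul', Complex.star_def, Complex.conj_I]
      ring
    rw [key, expand, hnorm i, Complex.I_mul_I, hSii] at h0
    have : ((((C.mulVec x i * (starRingEnd ℂ) (x i)).re : ℂ)) - C i i).re
        = (C.mulVec x i * (starRingEnd ℂ) (x i)).re - (C i i).re := by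
      simp
    simp only [neg_neg, one_mul] at h0
    rw [this] at h0
    linarith
  refine ⟨part1, fun hcrit => ?_⟩
  have hCx : ∀ i, C.mulVec x i
      = ((C.mulVec x i * (starRingEnd ℂ) (x i)).re : ℂ) * x i := by
    intro i
    have := congrFun hcrit i
    rw [hS] at this
    simp only [Matrix.sub_mulVec, Pi.sub_apply, Matrix.mulVec_diagonal, Pi.zero_apply,
      sub_eq_zero] at this
    exact this.symm
  have hd0 : ∀ i, 0 ≤ (C.mulVec x i * (starRingEnd ℂ) (x i)).re :=
    fun i => le_trans (hdiag i) (part1 i)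
  have habs : ∀ i, ‖C.mulVec x i‖
      = (C.mulVec x i * (starRingEnd ℂ) (x i)).re := by
    intro i
    conv_lhs => rw [hCx i]
    rw [norm_mul, Complex.norm_real, Real.norm_eq_abs, hx i, mul_one, _root_.abs_of_nonneg (hd0 i)]
  have hsum : star x ⬝ᵥ C.mulVec x
      = ∑ i, ((C.mulVec x i * (starRingEnd ℂ) (x i)).re : ℂ) := by
    simp only [dotProduct, Pi.star_apply, Complex.star_def]
    refine Finset.sum_congr rfl fun i _ => ?_
    conv_lhs => rw [hCx i]
    calc (starRingEnd ℂ) (x i) * (((C.mulVec x i * (starRingEnd ℂ) (x i)).re : ℂ) * x i)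
        = ((C.mulVec x i * (starRingEnd ℂ) (x i)).re : ℂ)
          * ((starRingEnd ℂ) (x i) * x i) := by ring
      _ = _ := by rw [hnorm i, mul_one]
  rw [hsum]
  push_cast
  exact Finset.sum_congr rfl fun i _ => by rw [habs i]
end
end

section
/- Let C = zz* + Δ with diag(C) ≥ 0. If x ∈ ℂⁿ₁ is a second-order critical point of f(x) = x*Cx on ℂⁿ₁, then for every sign vector s ∈ {±1}ⁿ, x*Cx ≥ (s⊙x)*C(s⊙x), where ⊙ denotes entrywise product. -/
open Matrix Complex

noncomputable section

theorem stmt16 {n : ℕ} (z x : Fin n → ℂ) (Δ : Matrix (Fin n) (Fin n) ℂ)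
    (hΔ : Δ.IsHermitian)
    (hz : ∀ i, ‖z i‖ = 1) (hx : ∀ i, ‖x i‖ = 1)
    (C : Matrix (Fin n) (Fin n) ℂ) (hC : C = Matrix.vecMulVec z (star z) + Δ)
    (hdiag : ∀ i, 0 ≤ (C i i).re)
    (S : Matrix (Fin n) (Fin n) ℂ)
    (hS : S = Matrix.diagonal (fun i => ((C.mulVec x i * (starRingEnd ℂ) (x i)).re : ℂ)) - C)
    (hfoc : S.mulVec x = 0)
    (hsoc : ∀ xd : Fin n → ℂ, (∀ i, (xd i * (starRingEnd ℂ) (x i)).re = 0) →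
      0 ≤ (star xd ⬝ᵥ S.mulVec xd).re) :
    ∀ s : Fin n → ℝ, (∀ i, s i = 1 ∨ s i = -1) →
      (star (fun i => (s i : ℂ) * x i) ⬝ᵥ C.mulVec (fun i => (s i : ℂ) * x i)).re
        ≤ (star x ⬝ᵥ C.mulVec x).re := by
  intro s hs
  set y : Fin n → ℂ := fun i => (s i : ℂ) * x i with hy
  set xd : Fin n → ℂ := fun i => Complex.I * y i with hxd
  have hs2 : ∀ i, s i * s i = 1 := by
    intro i; rcases hs i with h | h <;> rw [h] <;> norm_num
  have hnx : ∀ i, Complex.normSq (x i) = 1 := by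
    intro i
    have := hx i
    rw [← Complex.sq_norm, this]; norm_num
  have htan : ∀ i, (xd i * (starRingEnd ℂ) (x i)).re = 0 := by
    intro i
    have h1 : x i * (starRingEnd ℂ) (x i) = (Complex.normSq (x i) : ℂ) := Complex.mul_conj _
    have h2 : xd i * (starRingEnd ℂ) (x i)
        = Complex.I * ((s i : ℂ) * (Complex.normSq (x i) : ℂ)) := by
      simp only [hxd, hy]
      rw [mul_assoc, mul_assoc, h1]
    rw [h2]
    simp [Complex.mul_re]
  have hkey := hsoc xd htan
  have hxdsmul : xd = Complex.I • y := rfl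
  have h2 : star xd ⬝ᵥ S.mulVec xd = star y ⬝ᵥ S.mulVec y := by
    rw [hxdsmul, star_smul, mulVec_smul, smul_dotProduct, dotProduct_smul,
        smul_eq_mul, smul_eq_mul, ← mul_assoc]
    simp [Complex.conj_I, Complex.I_mul_I]
  have hdterm : ∀ i, star y i *
      ((Matrix.diagonal (fun i => ((C.mulVec x i * (starRingEnd ℂ) (x i)).re : ℂ))).mulVec y) i
      = ((C.mulVec x i * (starRingEnd ℂ) (x i)).re : ℂ) := by
    intro i
    rw [Matrix.mulVec_diagonal]
    have : star y i * (((C.mulVec x i * (starRingEnd ℂ) (x i)).re : ℂ) * y i)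
        = ((C.mulVec x i * (starRingEnd ℂ) (x i)).re : ℂ) * (star y i * y i) := by ring
    rw [this]
    have hyy : star y i * y i = (Complex.normSq (y i) : ℂ) := by
      simp only [Pi.star_apply, Complex.star_def]
      rw [mul_comm]; exact Complex.mul_conj _
    rw [hyy]
    have : Complex.normSq (y i) = 1 := by
      simp only [hy]
      rw [Complex.normSq_mul, Complex.normSq_ofReal, hnx i, hs2 i]
      ring
    rw [this]
    simp
  have hdiagsum : (star y ⬝ᵥ
      (Matrix.diagonal (fun i => ((C.mulVec x i * (starRingEnd ℂ) (x i)).re : ℂ))).mulVec y).re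
      = (star x ⬝ᵥ C.mulVec x).re := by
    have hL : star y ⬝ᵥ
        (Matrix.diagonal (fun i => ((C.mulVec x i * (starRingEnd ℂ) (x i)).re : ℂ))).mulVec y
        = ∑ i, ((C.mulVec x i * (starRingEnd ℂ) (x i)).re : ℂ) := by
      rw [dotProduct]
      exact Finset.sum_congr rfl fun i _ => hdterm i
    rw [hL]
    rw [dotProduct, Complex.re_sum, Complex.re_sum]
    refine Finset.sum_congr rfl fun i _ => ?_
    simp only [Pi.star_apply, Complex.star_def, Complex.ofReal_re]
    rw [mul_comm]
  have h3 : (star y ⬝ᵥ S.mulVec y).re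
      = (star x ⬝ᵥ C.mulVec x).re - (star y ⬝ᵥ C.mulVec y).re := by
    rw [hS, Matrix.sub_mulVec, dotProduct_sub, Complex.sub_re, hdiagsum]
  rw [h2, h3] at hkey
  linarith
end
end

section
/- For any x, z ∈ ℂⁿ₁, there exists a sign vector s ∈ {±1}ⁿ such that |z*(s ⊙ x)|² ≥ n²/4. -/
open Matrix Complex

noncomputable section

lemma aux17 {n : ℕ} (w : Fin n → ℂ) (h : (n : ℝ) / 2 ≤ ∑ i, |(w i).re|) :
    ∃ s : Fin n → ℝ, (∀ i, s i = 1 ∨ s i = -1) ∧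
      (n : ℝ) ^ 2 / 4 ≤ ‖∑ i, (s i : ℂ) * w i‖ ^ 2 := by
  refine ⟨fun i => if 0 ≤ (w i).re then 1 else -1, fun i => by dsimp only; split <;> simp, ?_⟩
  have hre : (∑ i, ((if 0 ≤ (w i).re then (1:ℝ) else -1 : ℝ) : ℂ) * w i).re
      = ∑ i, |(w i).re| := by
    rw [Complex.re_sum]
    refine Finset.sum_congr rfl fun i _ => ?_
    by_cases hi : 0 ≤ (w i).re
    · simp [hi, _root_.abs_of_nonneg hi]
    · simp only [hi, if_false]
      rw [_root_.abs_of_neg (lt_of_not_ge hi)]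
      simp
  have habs : (n : ℝ) / 2 ≤ ‖∑ i, ((if 0 ≤ (w i).re then (1:ℝ) else -1 : ℝ) : ℂ) * w i‖ := by
    calc (n : ℝ) / 2 ≤ ∑ i, |(w i).re| := h
      _ = (∑ i, ((if 0 ≤ (w i).re then (1:ℝ) else -1 : ℝ) : ℂ) * w i).re := hre.symm
      _ ≤ |(∑ i, ((if 0 ≤ (w i).re then (1:ℝ) else -1 : ℝ) : ℂ) * w i).re| := le_abs_self _
      _ ≤ ‖_‖ := Complex.abs_re_le_norm _
  have : ((n : ℝ) / 2) ^ 2 ≤ ‖∑ i, ((if 0 ≤ (w i).re then (1:ℝ) else -1 : ℝ) : ℂ) * w i‖ ^ 2 := by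
    apply pow_le_pow_left₀ (by positivity) habs
  calc (n : ℝ) ^ 2 / 4 = ((n : ℝ) / 2) ^ 2 := by ring
    _ ≤ _ := this

theorem stmt17 {n : ℕ} (z x : Fin n → ℂ)
    (hz : ∀ i, ‖z i‖ = 1) (hx : ∀ i, ‖x i‖ = 1) :
    ∃ s : Fin n → ℝ, (∀ i, s i = 1 ∨ s i = -1) ∧
      (n : ℝ) ^ 2 / 4 ≤ ‖(star z ⬝ᵥ fun i => (s i : ℂ) * x i)‖ ^ 2 := by
  set w : Fin n → ℂ := fun i => (starRingEnd ℂ) (z i) * x i with hw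
  have hwabs : ∀ i, ‖w i‖ = 1 := by
    intro i; simp [hw, _root_.map_mul, hz i, hx i]
  have hdot : ∀ s : Fin n → ℝ,
      (star z ⬝ᵥ fun i => (s i : ℂ) * x i) = ∑ i, (s i : ℂ) * w i := by
    intro s
    simp only [dotProduct, Pi.star_apply, RCLike.star_def, hw]
    exact Finset.sum_congr rfl fun i _ => by ring
  have hsum : (n : ℝ) ≤ ∑ i, (|(w i).re| + |(w i).im|) := by
    calc (n : ℝ) = ∑ _i : Fin n, (1 : ℝ) := by simp
      _ ≤ ∑ i, (|(w i).re| + |(w i).im|) := by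
        refine Finset.sum_le_sum fun i _ => ?_
        calc (1 : ℝ) = ‖w i‖ := (hwabs i).symm
          _ ≤ |(w i).re| + |(w i).im| := Complex.norm_le_abs_re_add_abs_im _
  rw [Finset.sum_add_distrib] at hsum
  rcases le_or_gt ((n : ℝ) / 2) (∑ i, |(w i).re|) with hc | hc
  · obtain ⟨s, hs1, hs2⟩ := aux17 w hc
    exact ⟨s, hs1, by rw [hdot s]; exact hs2⟩
  · have him : (n : ℝ) / 2 ≤ ∑ i, |(w i).im| := by linarith
    have him' : (n : ℝ) / 2 ≤ ∑ i, |((fun i => -Complex.I * w i) i).re| := by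
      convert him using 2 with i
      · simp
    obtain ⟨s, hs1, hs2⟩ := aux17 (fun i => -Complex.I * w i) him'
    refine ⟨s, hs1, ?_⟩
    rw [hdot s]
    have : (∑ i, (s i : ℂ) * (-Complex.I * w i)) = -Complex.I * ∑ i, (s i : ℂ) * w i := by
      rw [Finset.mul_sum]; exact Finset.sum_congr rfl fun i _ => by ring
    rw [this] at hs2
    simpa using hs2
end
end
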